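/- arXiv:1102.0962 — 4 statements merged into one kernel-verified Lean document; each statement's English description precedes it below -/
import Mathlib

section
/- The 8×8 symmetric matrix P with entries (1/625)·[[24,-36,-36,24,-36,24,24,-36],[-36,277,97,-79,97,-79,-259,54],[-36,97,277,-79,97,-259,-79,54],[24,-79,-79,247,-259,67,67,-36],[-36,97,97,-259,277,-79,-79,54],[24,-79,-259,67,-79,247,67,-36],[24,-259,-79,67,-79,67,247,-36],[-36,54,54,-36,54,-36,-36,54]] is positive semidefinite. -/
set_option maxHeartbeats 4000000

/-- The matrix P from the flag algebra proof is positive semidefinite. -/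
theorem P_posSemidef :
    ((1 / 625 : ℝ) • (!![24,-36,-36,24,-36,24,24,-36;
      -36,277,97,-79,97,-79,-259,54;
      -36,97,277,-79,97,-259,-79,54;
      24,-79,-79,247,-259,67,67,-36;
      -36,97,97,-259,277,-79,-79,54;
      24,-79,-259,67,-79,247,67,-36;
      24,-259,-79,67,-79,67,247,-36;
      -36,54,54,-36,54,-36,-36,54] : Matrix (Fin 8) (Fin 8) ℝ)).PosSemidef := by
  rw [Matrix.posSemidef_iff_dotProduct_mulVec]
  constructor
  · show _ = _
    ext i j
    fin_cases i <;> fin_cases j <;> rfl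
  · intro x
    have h0 := sq_nonneg ((2)*x 0+(-3)*x (Fin.succ 0)+(-3)*x ((Fin.succ 0).succ)+(2)*x ((Fin.succ 0).succ.succ)+(-3)*x ((Fin.succ 0).succ.succ.succ)+(2)*x ((Fin.succ 0).succ.succ.succ.succ)+(2)*x ((Fin.succ 0).succ.succ.succ.succ.succ)+(-3)*x ((Fin.succ 0).succ.succ.succ.succ.succ.succ))
    have h1 := sq_nonneg ((223)*x (Fin.succ 0)+(43)*x ((Fin.succ 0).succ)+(-43)*x ((Fin.succ 0).succ.succ)+(43)*x ((Fin.succ 0).succ.succ.succ)+(-43)*x ((Fin.succ 0).succ.succ.succ.succ)+(-223)*x ((Fin.succ 0).succ.succ.succ.succ.succ))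
    have h2 := sq_nonneg ((266)*x ((Fin.succ 0).succ)+(-43)*x ((Fin.succ 0).succ.succ)+(43)*x ((Fin.succ 0).succ.succ.succ)+(-266)*x ((Fin.succ 0).succ.succ.succ.succ))
    have h3 := sq_nonneg ((1)*x ((Fin.succ 0).succ.succ)+(-1)*x ((Fin.succ 0).succ.succ.succ))
    simp only [dotProduct, Matrix.mulVec, Matrix.smul_apply, Fin.sum_univ_succ,
      Fin.sum_univ_zero, Matrix.of_apply, Matrix.cons_val', Matrix.cons_val_zero,
      Matrix.cons_val_succ, Matrix.empty_val', Matrix.cons_val_fin_one, star_trivial,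
      smul_eq_mul, Pi.star_apply, add_zero]
    nlinarith [h0, h1, h2, h3]
end

section
/- The 6×6 symmetric matrix Q with entries (1/2500)·[[1728,-1551,-1551,-1308,687,687],[-1551,2336,742,908,2557,-4084],[-1551,742,2336,908,-4084,2557],[-1308,908,908,1728,-254,-254],[687,2557,-4084,-254,15264,-14424],[687,-4084,2557,-254,-14424,15264]] is positive semidefinite. -/
private lemma vec6_0 {α} (a b c d e f : α) : ![a,b,c,d,e,f] 0 = a := rfl
private lemma vec6_1 {α} (a b c d e f : α) : ![a,b,c,d,e,f] 1 = b := rfl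
private lemma vec6_2 {α} (a b c d e f : α) : ![a,b,c,d,e,f] 2 = c := rfl
private lemma vec6_3 {α} (a b c d e f : α) : ![a,b,c,d,e,f] 3 = d := rfl
private lemma vec6_4 {α} (a b c d e f : α) : ![a,b,c,d,e,f] 4 = e := rfl
private lemma vec6_5 {α} (a b c d e f : α) : ![a,b,c,d,e,f] 5 = f := rfl


private lemma consv1 {α} (x : α) (u : Fin 1 → α) : Matrix.vecCons x u 1 = u 0 := rfl
private lemma consv2 {α} (x : α) (u : Fin 2 → α) : Matrix.vecCons x u 2 = u 1 := rfl
private lemma consv3 {α} (x : α) (u : Fin 3 → α) : Matrix.vecCons x u 3 = u 2 := rfl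
private lemma consv4 {α} (x : α) (u : Fin 4 → α) : Matrix.vecCons x u 4 = u 3 := rfl
private lemma consv5 {α} (x : α) (u : Fin 5 → α) : Matrix.vecCons x u 5 = u 4 := rfl

/-- The matrix Q from the flag algebra proof is positive semidefinite. -/
theorem Q_posSemidef :
    ((1 / 2500 : ℝ) • (!![1728,-1551,-1551,-1308,687,687;
      -1551,2336,742,908,2557,-4084;
      -1551,742,2336,908,-4084,2557;
      -1308,908,908,1728,-254,-254;
      687,2557,-4084,-254,15264,-14424;
      687,-4084,2557,-254,-14424,15264] : Matrix (Fin 6) (Fin 6) ℝ)).PosSemidef := by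
  rw [Matrix.posSemidef_iff_dotProduct_mulVec]
  constructor
  · ext i j
    fin_cases i <;> fin_cases j <;>
      simp [Matrix.conjTranspose, Matrix.transpose, Matrix.smul_apply, Matrix.of_apply,
        vec6_0, vec6_1, vec6_2, vec6_3, vec6_4, vec6_5, consv1, consv2, consv3, consv4, consv5, Matrix.vecHead, Matrix.vecTail]
  · intro x
    simp only [dotProduct, Matrix.mulVec, Matrix.smul_apply, Fin.sum_univ_six,
      Matrix.of_apply, vec6_0, vec6_1, vec6_2, vec6_3, vec6_4, vec6_5,
      Pi.star_apply, star_trivial, smul_eq_mul]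
    set a := x 0; set b := x 1; set c := x 2; set d := x 3; set e := x 4; set f := x 5
    nlinarith [sq_nonneg (576*a - 517*b - 517*c - 436*d + 229*e + 229*f),
      sq_nonneg (181223*b - 124825*c - 51076*d + 609337*e - 665735*f),
      sq_nonneg (89898412*c - 81415144*d - 232218765*e + 142320353*f),
      sq_nonneg d, sq_nonneg (e - f)]
end

section
/- The 5×5 symmetric matrix R with entries (1/625)·[[1512,568,-380,568,-376],[568,475,-191,0,-93],[-380,-191,192,-191,-2],[568,0,-191,475,-93],[-376,-93,-2,-93,190]] is positive semidefinite. -/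
/-- The matrix R from the flag algebra proof is positive semidefinite. -/
theorem R_posSemidef :
    ((1 / 625 : ℝ) • (!![1512,568,-380,568,-376;
      568,475,-191,0,-93;
      -380,-191,192,-191,-2;
      568,0,-191,475,-93;
      -376,-93,-2,-93,190] : Matrix (Fin 5) (Fin 5) ℝ)).PosSemidef := by
  rw [Matrix.posSemidef_iff_dotProduct_mulVec]
  constructor
  · ext i j
    fin_cases i <;> fin_cases j <;> simp [Matrix.conjTranspose_apply]
  · intro x
    have h0 := x 0; have h1 := x 1
    simp [dotProduct, Matrix.mulVec, Fin.sum_univ_five, Matrix.smul_apply,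
      Fin.isValue, smul_eq_mul]
    nlinarith [sq_nonneg (378*x 0+142*x 1-95*x 2+142*x 3-94*x 4),
      sq_nonneg (49447*x 1-9119*x 2-40328*x 3+9119*x 4),
      sq_nonneg (x 2-x 3-x 4)]
end

section
/- If for every n the maximum number of induced copies of C5 in a triangle-free graph on n vertices is at most (24/625)·C(n,5) + o(n^5), then every triangle-free graph on n vertices has at most (n/5)^5 copies of C5; in particular, the existence of a single triangle-free graph on n vertices with strictly more than (n/5)^5 copies of C5 implies, via blow-ups, that ex_{C5}(nN, K3)/C(nN,5) exceeds 24/625 + 120ε/n^5 for some ε > 0 and all large N. -/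
open SimpleGraph Finset

/-- A finset `s` of vertices contains a 5-cycle of `G` as a subgraph. -/
def hasC5 {V : Type*} (G : SimpleGraph V) (s : Finset V) : Prop :=
  ∃ f : Fin 5 → V, Function.Injective f ∧ (∀ i, f i ∈ s) ∧ ∀ i, G.Adj (f i) (f (i + 1))

/-- The number of 5-element vertex subsets spanning a 5-cycle of `G`. -/
noncomputable def c5Count {V : Type*} (G : SimpleGraph V) : ℕ :=
  {s : Finset V | s.card = 5 ∧ hasC5 G s}.ncard

/-- Blow-up of a graph: each vertex replaced by `N` independent copies. -/
def blowup {V : Type*} (G : SimpleGraph V) (N : ℕ) : SimpleGraph (V × Fin N) where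
  Adj x y := G.Adj x.1 y.1
  symm := ⟨fun _ _ h => h.symm⟩
  loopless := ⟨fun x h => G.loopless.irrefl x.1 h⟩

/-- The 5-cycle graph. -/
def C5 : SimpleGraph (Fin 5) := SimpleGraph.fromRel (fun i j => j = i + 1)

/-- Number of vertex subsets of `G` inducing a copy of `A`. -/
noncomputable def inducedCount {α V : Type*} [Fintype V] (A : SimpleGraph α) (G : SimpleGraph V) : ℕ :=
  {s : Finset V | Nonempty ((G.induce (↑s : Set V)) ≃g A)}.ncard

theorem test : True := trivial
/-- Maximum number of 5-subsets spanning a 5-cycle over triangle-free graphs on m vertices. -/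
noncomputable def ex5 (m : ℕ) : ℕ :=
  sSup {c | ∃ G : SimpleGraph (Fin m), G.CliqueFree 3 ∧ c5Count G = c}

lemma blowup_cliqueFree {V : Type*} {G : SimpleGraph V} (h : G.CliqueFree 3) (N : ℕ) :
    (blowup G N).CliqueFree 3 := by
  classical
  intro t ht
  obtain ⟨a, b, c, hab, hac, hbc, rfl⟩ := Finset.card_eq_three.mp ht.2
  have h1 : (blowup G N).Adj a b := ht.1 (by simp) (by simp) hab
  have h2 : (blowup G N).Adj a c := ht.1 (by simp) (by simp) hac
  have h3 : (blowup G N).Adj b c := ht.1 (by simp) (by simp) hbc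
  exact h _ (is3Clique_triple_iff.mpr ⟨h1, h2, h3⟩)

lemma c5Count_le {m : ℕ} {H : SimpleGraph (Fin m)} (h : H.CliqueFree 3) :
    c5Count H ≤ ex5 m := by
  apply le_csSup
  · refine ⟨Nat.card (Finset (Fin m)), ?_⟩
    rintro c ⟨G, -, rfl⟩
    have : ({s : Finset (Fin m) | s.card = 5 ∧ hasC5 G s} : Set _).ncard ≤
        (Set.univ : Set (Finset (Fin m))).ncard :=
      Set.ncard_le_ncard (Set.subset_univ _) Set.finite_univ
    simpa [Set.ncard_univ, c5Count] using this
  · exact ⟨H, h, rfl⟩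

lemma c5Count_blowup {n : ℕ} (G : SimpleGraph (Fin n)) (N : ℕ) :
    c5Count G * N ^ 5 ≤ c5Count (blowup G N) := by
  classical
  set S : Set (Finset (Fin n)) := {s | s.card = 5 ∧ hasC5 G s} with hS
  set T : Set (Finset (Fin n × Fin N)) := {s | s.card = 5 ∧ hasC5 (blowup G N) s} with hT
  have main : ∀ (s : Finset (Fin n)) (hs : s.card = 5) (g : Fin 5 → Fin N),
      hasC5 G s →
      ((Finset.univ : Finset (Fin 5)).image
        (fun j => ((s.orderIsoOfFin hs j : Fin n), g j))) ∈ T := by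
    intro s hs g ⟨f, hfinj, hfmem, hfadj⟩
    set e := s.orderIsoOfFin hs with he
    constructor
    · rw [Finset.card_image_of_injective _ (fun i j hij => ?_), Finset.card_univ,
        Fintype.card_fin]
      have : (e i : Fin n) = e j := congrArg Prod.fst hij
      exact e.injective (Subtype.ext this)
    · refine ⟨fun i => ((f i : Fin n), g (e.symm ⟨f i, hfmem i⟩)), ?_, ?_, ?_⟩
      · intro i j hij
        exact hfinj (congrArg Prod.fst hij)
      · intro i
        refine Finset.mem_image.mpr ⟨e.symm ⟨f i, hfmem i⟩, Finset.mem_univ _, ?_⟩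
        simp
      · intro i
        exact hfadj i
  set F : (↥S × (Fin 5 → Fin N)) → ↥T := fun p =>
    ⟨(Finset.univ : Finset (Fin 5)).image
      (fun j => ((p.1.1.orderIsoOfFin p.1.2.1 j : Fin n), p.2 j)),
      main p.1.1 p.1.2.1 p.2 p.1.2.2⟩ with hF
  have hFinj : Function.Injective F := by
    rintro ⟨⟨s, hs5, hsC⟩, g⟩ ⟨⟨s', hs5', hsC'⟩, g'⟩ h
    have him : (Finset.univ : Finset (Fin 5)).image
        (fun j => ((s.orderIsoOfFin hs5 j : Fin n), g j)) =
        (Finset.univ : Finset (Fin 5)).image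
        (fun j => ((s'.orderIsoOfFin hs5' j : Fin n), g' j)) := congrArg Subtype.val h
    have hss' : s = s' := by
      ext x
      constructor
      · intro hx
        have : ((x : Fin n), g ((s.orderIsoOfFin hs5).symm ⟨x, hx⟩)) ∈
            (Finset.univ : Finset (Fin 5)).image
            (fun j => ((s.orderIsoOfFin hs5 j : Fin n), g j)) := by
          refine Finset.mem_image.mpr ⟨(s.orderIsoOfFin hs5).symm ⟨x, hx⟩, Finset.mem_univ _, ?_⟩
          simp
        rw [him] at this
        obtain ⟨j, -, hj⟩ := Finset.mem_image.mp this
        have : (s'.orderIsoOfFin hs5' j : Fin n) = x := congrArg Prod.fst hj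
        rw [← this]; exact (s'.orderIsoOfFin hs5' j).2
      · intro hx
        have : ((x : Fin n), g' ((s'.orderIsoOfFin hs5').symm ⟨x, hx⟩)) ∈
            (Finset.univ : Finset (Fin 5)).image
            (fun j => ((s'.orderIsoOfFin hs5' j : Fin n), g' j)) := by
          refine Finset.mem_image.mpr ⟨(s'.orderIsoOfFin hs5').symm ⟨x, hx⟩, Finset.mem_univ _, ?_⟩
          simp
        rw [← him] at this
        obtain ⟨j, -, hj⟩ := Finset.mem_image.mp this
        have : (s.orderIsoOfFin hs5 j : Fin n) = x := congrArg Prod.fst hj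
        rw [← this]; exact (s.orderIsoOfFin hs5 j).2
    subst hss'
    have hgg' : g = g' := by
      funext j
      have hmem : ((s.orderIsoOfFin hs5 j : Fin n), g j) ∈
          (Finset.univ : Finset (Fin 5)).image
          (fun j => ((s.orderIsoOfFin hs5' j : Fin n), g' j)) := by
        rw [← him]
        exact Finset.mem_image.mpr ⟨j, Finset.mem_univ _, rfl⟩
      obtain ⟨j', -, hj'⟩ := Finset.mem_image.mp hmem
      have h1 : (s.orderIsoOfFin hs5' j' : Fin n) = (s.orderIsoOfFin hs5 j : Fin n) :=
        congrArg Prod.fst hj'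
      have hjj' : j' = j := by
        apply (s.orderIsoOfFin hs5).injective
        apply Subtype.ext
        rw [← h1]
      subst hjj'
      exact (congrArg Prod.snd hj').symm
    simp [hgg']
  have hcard := Nat.card_le_card_of_injective F hFinj
  rw [Nat.card_prod, Nat.card_coe_set_eq, Nat.card_coe_set_eq] at hcard
  simpa [c5Count, Nat.card_eq_fintype_card] using hcard

lemma c5Count_comap_equiv {α β : Type*} [Fintype β] (e : α ≃ β) (G : SimpleGraph α) :
    c5Count G ≤ c5Count (G.comap e.symm) := by
  classical
  set S : Set (Finset α) := {s | s.card = 5 ∧ hasC5 G s}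
  set T : Set (Finset β) := {s | s.card = 5 ∧ hasC5 (G.comap e.symm) s}
  have main : ∀ s ∈ S, s.map e.toEmbedding ∈ T := by
    rintro s ⟨hs5, f, hfinj, hfmem, hfadj⟩
    refine ⟨by simp [hs5], fun i => e (f i), e.injective.comp hfinj, ?_, ?_⟩
    · intro i
      exact Finset.mem_map_of_mem _ (hfmem i)
    · intro i
      simpa [SimpleGraph.comap] using hfadj i
  have hFinj : Function.Injective (fun p : ↥S => (⟨p.1.map e.toEmbedding, main p.1 p.2⟩ : ↥T)) := by
    rintro ⟨s, hs⟩ ⟨s', hs'⟩ h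
    have := congrArg Subtype.val h
    simp only at this
    exact Subtype.ext (Finset.map_injective _ this)
  have hcard := Nat.card_le_card_of_injective _ hFinj
  rwa [Nat.card_coe_set_eq, Nat.card_coe_set_eq] at hcard

lemma key_blowup {n : ℕ} {G : SimpleGraph (Fin n)} (hG : G.CliqueFree 3) (N : ℕ) :
    c5Count G * N ^ 5 ≤ ex5 (n * N) := by
  have h1 := c5Count_blowup G N
  have h2 := c5Count_comap_equiv (finProdFinEquiv : Fin n × Fin N ≃ Fin (n * N)) (blowup G N)
  have h3 : ((blowup G N).comap (finProdFinEquiv : Fin n × Fin N ≃ Fin (n * N)).symm).CliqueFree 3 :=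
    (blowup_cliqueFree hG N).comap
      (SimpleGraph.Embedding.comap
        (finProdFinEquiv : Fin n × Fin N ≃ Fin (n * N)).symm.toEmbedding (blowup G N)).isContained
  exact le_trans h1 (le_trans h2 (c5Count_le h3))

lemma choose5_lt {m : ℕ} (hm : 5 ≤ m) : 120 * (m.choose 5 : ℝ) < (m : ℝ) ^ 5 := by
  have h1 : m.descFactorial 5 = 120 * m.choose 5 := by
    rw [Nat.descFactorial_eq_factorial_mul_choose]
    norm_num [Nat.factorial]
  have h2 : m.descFactorial 5 < m ^ 5 :=
    Nat.descFactorial_lt_pow (by omega) (by norm_num)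
  rw [h1] at h2
  exact_mod_cast h2

lemma five_le_of_pos {n : ℕ} {G : SimpleGraph (Fin n)} (h : 0 < c5Count G) : 5 ≤ n := by
  have hne : ({s : Finset (Fin n) | s.card = 5 ∧ hasC5 G s} : Set _).Nonempty :=
    Set.nonempty_of_ncard_ne_zero (by simpa [c5Count] using h.ne')
  obtain ⟨s, hs5, -⟩ := hne
  calc 5 = s.card := hs5.symm
    _ ≤ Fintype.card (Fin n) := Finset.card_le_univ s
    _ = n := Fintype.card_fin n

/-- If the Turán-type maximum for C5 in triangle-free graphs is at most
(24/625)·C(n,5) + o(n^5), then every triangle-free graph on n vertices has at most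
(n/5)^5 copies of C5; in particular a single triangle-free graph beating (n/5)^5
forces, via blow-ups, ex_{C5}(nN,K3)/C(nN,5) > 24/625 + 120ε/n^5 for some ε > 0 and
all large N. -/
theorem turan_density_argument :
    ((∃ f : ℕ → ℝ, f =o[Filter.atTop] (fun n : ℕ => (n : ℝ) ^ 5) ∧
        ∀ n : ℕ, (ex5 n : ℝ) ≤ 24 / 625 * (n.choose 5 : ℝ) + f n) →
      ∀ (n : ℕ) (G : SimpleGraph (Fin n)), G.CliqueFree 3 →
        (c5Count G : ℝ) ≤ ((n : ℝ) / 5) ^ 5) ∧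
    (∀ (n : ℕ) (G : SimpleGraph (Fin n)), G.CliqueFree 3 →
      ((n : ℝ) / 5) ^ 5 < (c5Count G : ℝ) →
        ∃ ε : ℝ, 0 < ε ∧ ∃ N₀ : ℕ, ∀ N ≥ N₀,
          24 / 625 + 120 * ε / (n : ℝ) ^ 5 <
            (ex5 (n * N) : ℝ) / ((n * N).choose 5 : ℝ)) := by
  have hpow : ∀ n : ℕ, ((n : ℝ) / 5) ^ 5 = (n : ℝ) ^ 5 / 3125 := by
    intro n; rw [div_pow]; norm_num
  constructor
  · -- first part
    rintro ⟨f, hf, hbd⟩ n G hG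
    by_contra hlt
    push_neg at hlt
    have hcpos : (0 : ℝ) < (c5Count G : ℝ) := lt_of_le_of_lt (by positivity) hlt
    have hn5 : 5 ≤ n := five_le_of_pos (by exact_mod_cast hcpos)
    have hnR : (0 : ℝ) < (n : ℝ) ^ 5 := by positivity
    set c : ℝ := (c5Count G : ℝ) with hc
    set ε : ℝ := c - (n : ℝ) ^ 5 / 3125 with hεdef
    have hε : 0 < ε := by
      have := hpow n ▸ hlt
      simp only [hεdef]; linarith
    have hnN : Filter.Tendsto (fun N : ℕ => n * N) Filter.atTop Filter.atTop :=
      Filter.tendsto_atTop_mono (fun N => Nat.le_mul_of_pos_left N (by omega))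
        Filter.tendsto_id
    have hev : ∀ᶠ m in Filter.atTop, ‖f m‖ ≤ ε / (2 * (n : ℝ) ^ 5) * ‖((m : ℕ) : ℝ) ^ 5‖ :=
      hf.def (by positivity)
    obtain ⟨N, hN2, hN1⟩ := ((hnN.eventually hev).and (Filter.eventually_ge_atTop 1)).exists
    have hNR : (1 : ℝ) ≤ (N : ℝ) := by exact_mod_cast hN1
    have hkey : c * (N : ℝ) ^ 5 ≤ (ex5 (n * N) : ℝ) := by
      have := key_blowup hG N
      rw [hc]; exact_mod_cast this
    have hbd' := hbd (n * N)
    have hch : ((n * N).choose 5 : ℝ) * 120 ≤ ((n : ℝ) * (N : ℝ)) ^ 5 := by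
      have hm : 5 ≤ n * N := le_trans hn5 (by calc n = n * 1 := (mul_one n).symm
        _ ≤ n * N := Nat.mul_le_mul_left n hN1)
      have := choose5_lt hm
      push_cast at this ⊢
      linarith
    have hfn : f (n * N) ≤ ε / (2 * (n : ℝ) ^ 5) * ((n : ℝ) ^ 5 * (N : ℝ) ^ 5) := by
      have h1 := hN2
      rw [Real.norm_eq_abs, Real.norm_eq_abs] at h1
      have h2 : |((n * N : ℕ) : ℝ) ^ 5| = (n : ℝ) ^ 5 * (N : ℝ) ^ 5 := by
        rw [abs_of_nonneg (by positivity)]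
        push_cast
        ring
      calc f (n * N) ≤ |f (n * N)| := le_abs_self _
        _ ≤ ε / (2 * (n : ℝ) ^ 5) * |((n * N : ℕ) : ℝ) ^ 5| := h1
        _ = ε / (2 * (n : ℝ) ^ 5) * ((n : ℝ) ^ 5 * (N : ℝ) ^ 5) := by rw [h2]
    have hfn' : f (n * N) ≤ ε / 2 * (N : ℝ) ^ 5 := by
      have heq : ε / (2 * (n : ℝ) ^ 5) * ((n : ℝ) ^ 5 * (N : ℝ) ^ 5) = ε / 2 * (N : ℝ) ^ 5 := by
        field_simp
      linarith [heq ▸ hfn]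
    have hcast : ((n * N : ℕ) : ℝ) ^ 5 = ((n : ℝ) * (N : ℝ)) ^ 5 := by push_cast; ring
    -- combine: c * N^5 ≤ 24/625 * choose + f ≤ (n*N)^5/3125 + f
    have hmain : c * (N : ℝ) ^ 5 ≤ (n : ℝ) ^ 5 * (N : ℝ) ^ 5 / 3125 + f (n * N) := by
      have h625 : (24 : ℝ) / 625 * ((n * N).choose 5 : ℝ) ≤ (n : ℝ) ^ 5 * (N : ℝ) ^ 5 / 3125 := by
        have : ((n : ℝ) * (N : ℝ)) ^ 5 = (n : ℝ) ^ 5 * (N : ℝ) ^ 5 := by ring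
        nlinarith [hch]
      linarith [hkey, hbd']
    -- ε * N^5 ≤ ε/2 * N^5 but ε * N^5 > 0
    have hNpow : (1 : ℝ) ≤ (N : ℝ) ^ 5 := one_le_pow₀ hNR
    have hx : ε * (N : ℝ) ^ 5 = c * (N : ℝ) ^ 5 - (n : ℝ) ^ 5 * (N : ℝ) ^ 5 / 3125 := by
      rw [hεdef]; ring
    nlinarith [hmain, hfn', hx, mul_pos hε (lt_of_lt_of_le one_pos hNpow)]
  · -- second part
    intro n G hG hlt
    have hcpos : (0 : ℝ) < (c5Count G : ℝ) := lt_of_le_of_lt (by positivity) hlt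
    have hn5 : 5 ≤ n := five_le_of_pos (by exact_mod_cast hcpos)
    have hnR : (0 : ℝ) < (n : ℝ) ^ 5 := by positivity
    set c : ℝ := (c5Count G : ℝ) with hc
    refine ⟨c - (n : ℝ) ^ 5 / 3125, by have := hpow n ▸ hlt; linarith, 1, fun N hN1 => ?_⟩
    have hNR : (1 : ℝ) ≤ (N : ℝ) := by exact_mod_cast hN1
    have hm : 5 ≤ n * N := le_trans hn5 (by calc n = n * 1 := (mul_one n).symm
      _ ≤ n * N := Nat.mul_le_mul_left n hN1)
    have hchpos : (0 : ℝ) < ((n * N).choose 5 : ℝ) := by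
      exact_mod_cast Nat.choose_pos hm
    have hch : 120 * ((n * N).choose 5 : ℝ) < (n : ℝ) ^ 5 * (N : ℝ) ^ 5 := by
      have := choose5_lt hm
      push_cast at this
      nlinarith [this]
    have hkey : c * (N : ℝ) ^ 5 ≤ (ex5 (n * N) : ℝ) := by
      have := key_blowup hG N
      rw [hc]; exact_mod_cast this
    have heq : 24 / 625 + 120 * (c - (n : ℝ) ^ 5 / 3125) / (n : ℝ) ^ 5 = 120 * c / (n : ℝ) ^ 5 := by
      field_simp
      ring
    rw [heq, div_lt_div_iff₀ hnR hchpos]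
    have P1 : c * (120 * ((n * N).choose 5 : ℝ)) < c * ((n : ℝ) ^ 5 * (N : ℝ) ^ 5) :=
      mul_lt_mul_of_pos_left hch hcpos
    have P2 : (c * (N : ℝ) ^ 5) * (n : ℝ) ^ 5 ≤ (ex5 (n * N) : ℝ) * (n : ℝ) ^ 5 :=
      mul_le_mul_of_nonneg_right hkey (by positivity)
    nlinarith [P1, P2]
end
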